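/- There exists a constant K such that for all positive integers l, m and all n with 0 ≤ n ≤ lm, 0 ≤ P[X_{l,m} = n] - γ_{l,m}·P[S_l^{(m)} = n] ≤ K/(l+1)^2, where γ_{l,m} = 1/(1 + 1/l). -/

import Mathlib

/-- The polynomial coefficient `C(m,n)_{l+1}`: the coefficient of `x^n` in
`(1 + x + x^2 + ⋯ + x^l)^m`. -/
noncomputable def polyCoeff (l m n : ℕ) : ℕ :=
  ((∑ i ∈ Finset.range (l + 1), (Polynomial.X : Polynomial ℕ) ^ i) ^ m).coeff n

/-- `cComp l n j` is the number of `j`-tuples of integers in `{0,…,l}` summing to `n`. -/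
noncomputable def cComp (l n j : ℕ) : ℕ :=
  Nat.card {f : Fin j → ℕ // (∀ i, f i ≤ l) ∧ ∑ i, f i = n}

/-- `hRect l m n`: the number of compositions of `n` with at most `m` parts (at least one),
each part in `{0,…,l}`. -/
noncomputable def hRect (l m n : ℕ) : ℕ := ∑ j ∈ Finset.Icc 1 m, cComp l n j

/-- `P[X_{l,m} = n]`. -/
noncomputable def probX (l m n : ℕ) : ℝ :=
  (hRect l m n : ℝ) / ∑ i ∈ Finset.range (l * m + 1), (hRect l m i : ℝ)

/-- `P[S_l^{(m)} = n] = (1/(l+1))^m · C(m,n)_{l+1}`. -/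
noncomputable def probS (l m n : ℕ) : ℝ :=
  (1 / ((l : ℝ) + 1)) ^ m * polyCoeff l m n

namespace ETB
open Polynomial Finset

noncomputable def P (l : ℕ) : Polynomial ℕ :=
  ∑ i ∈ Finset.range (l + 1), (Polynomial.X : Polynomial ℕ) ^ i

lemma polyCoeff_eq (l m n : ℕ) : polyCoeff l m n = ((P l) ^ m).coeff n := rfl

lemma coeff_P (l b : ℕ) : (P l).coeff b = if b ≤ l then 1 else 0 := by
  simp [P, Polynomial.coeff_X_pow, Finset.sum_ite_eq', Nat.lt_succ_iff]

lemma natDegree_P (l : ℕ) : (P l).natDegree ≤ l := by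
  apply Polynomial.natDegree_sum_le_of_forall_le
  intro i hi
  simpa using Nat.lt_succ_iff.mp (Finset.mem_range.mp hi)

lemma natDegree_P_pow (l j : ℕ) : ((P l) ^ j).natDegree ≤ l * j := by
  calc ((P l) ^ j).natDegree ≤ j * (P l).natDegree := Polynomial.natDegree_pow_le
  _ ≤ j * l := Nat.mul_le_mul_left _ (natDegree_P l)
  _ = l * j := Nat.mul_comm _ _

lemma sum_coeff_P_pow (l j N : ℕ) (hN : l * j < N) :
    ∑ i ∈ Finset.range N, ((P l) ^ j).coeff i = (l + 1) ^ j := by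
  have h := Polynomial.eval_eq_sum_range' (lt_of_le_of_lt (natDegree_P_pow l j) hN) (1 : ℕ)
  simp only [one_pow, mul_one] at h
  rw [← h]
  simp [P]

lemma coeff_P_pow_le (l j n : ℕ) : ((P l) ^ (j + 1)).coeff n ≤ (l + 1) ^ j := by
  rw [pow_succ, Polynomial.coeff_mul]
  calc ∑ p ∈ Finset.HasAntidiagonal.antidiagonal n, ((P l) ^ j).coeff p.1 * (P l).coeff p.2
      ≤ ∑ p ∈ Finset.HasAntidiagonal.antidiagonal n, ((P l) ^ j).coeff p.1 * 1 := by
        refine Finset.sum_le_sum fun p _ => ?_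
        refine Nat.mul_le_mul_left _ ?_
        rw [coeff_P]; split <;> simp
    _ = ∑ a ∈ Finset.range (n + 1), ((P l) ^ j).coeff a := by
        simp only [mul_one]
        rw [Finset.Nat.sum_antidiagonal_eq_sum_range_succ_mk]
    _ ≤ ∑ a ∈ Finset.range (max (n + 1) (l * j + 1)), ((P l) ^ j).coeff a :=
        Finset.sum_le_sum_of_subset (Finset.range_subset_range.mpr (le_max_left _ _))
    _ = (l + 1) ^ j := sum_coeff_P_pow l j _
        (lt_of_lt_of_le (Nat.lt_succ_self _) (le_max_right _ _))

lemma P_pow_eq (l j : ℕ) : (P l) ^ j =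
    ∑ g ∈ Fintype.piFinset (fun _ : Fin j => Finset.range (l + 1)),
      (Polynomial.X : Polynomial ℕ) ^ (∑ k, g k) := by
  have : (P l) ^ j = ∏ _k : Fin j, P l := by simp
  rw [this, P, Finset.prod_univ_sum]
  exact Finset.sum_congr rfl fun g _ => Finset.prod_pow_eq_pow_sum _ _ _

lemma cComp_eq_coeff (l n j : ℕ) : cComp l n j = ((P l) ^ j).coeff n := by
  have hc : ((P l) ^ j).coeff n =
      ((Fintype.piFinset (fun _ : Fin j => Finset.range (l + 1))).filter
        (fun g => ∑ k, g k = n)).card := by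
    rw [P_pow_eq, Polynomial.finset_sum_coeff]
    simp only [Polynomial.coeff_X_pow]
    rw [Finset.card_filter]
    refine Finset.sum_congr rfl fun g _ => ?_
    simp [eq_comm]
  rw [hc, cComp, ← Nat.card_eq_finsetCard]
  apply Nat.card_congr
  apply Equiv.subtypeEquivRight
  intro f
  simp [Fintype.mem_piFinset, Nat.lt_succ_iff, and_comm]

lemma sum_hRect (l m : ℕ) (hm : 1 ≤ m) :
    ∑ i ∈ Finset.range (l * m + 1), hRect l m i = ∑ j ∈ Finset.Icc 1 m, (l + 1) ^ j := by
  unfold hRect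
  rw [Finset.sum_comm]
  refine Finset.sum_congr rfl fun j hj => ?_
  simp only [Finset.mem_Icc] at hj
  rw [Finset.sum_congr rfl fun i _ => cComp_eq_coeff l i j]
  exact sum_coeff_P_pow l j _ (Nat.lt_succ_of_le (Nat.mul_le_mul_left l hj.2))

end ETB

/-- There is a constant `K` such that for all `l, m ≥ 1` and `0 ≤ n ≤ lm`,
`0 ≤ P[X_{l,m}=n] - γ_{l,m} P[S_l^{(m)}=n] ≤ K/(l+1)^2` with `γ_{l,m} = 1/(1+1/l)`. -/
theorem error_term_bound :
    ∃ K : ℝ, ∀ l m n : ℕ, 1 ≤ l → 1 ≤ m → n ≤ l * m →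
      0 ≤ probX l m n - (1 / (1 + 1 / (l : ℝ))) * probS l m n ∧
      probX l m n - (1 / (1 + 1 / (l : ℝ))) * probS l m n ≤ K / ((l : ℝ) + 1) ^ 2 := by
  use 3
  intro l m n hl hm hn
  obtain ⟨k, rfl⟩ : ∃ k, m = k + 1 := ⟨m - 1, (Nat.succ_pred_eq_of_pos hm).symm⟩
  set A : ℝ := (l : ℝ) + 1 with hAdef
  have hl1 : (1 : ℝ) ≤ (l : ℝ) := by exact_mod_cast hl
  have hA2 : (2 : ℝ) ≤ A := by simp [hAdef]; linarith
  have hA0 : (0 : ℝ) < A := by linarith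
  have hA1 : (1 : ℝ) < A := by linarith
  have hAne : A ≠ 1 := ne_of_gt hA1
  -- closed form of the normalizing constant
  have hZnat : ∑ i ∈ Finset.range (l * (k + 1) + 1), hRect l (k + 1) i
      = ∑ j ∈ Finset.Icc 1 (k + 1), (l + 1) ^ j := ETB.sum_hRect l (k + 1) (Nat.le_add_left 1 k)
  have hZr : ∑ i ∈ Finset.range (l * (k + 1) + 1), (hRect l (k + 1) i : ℝ)
      = (A ^ (k + 2) - A) / (A - 1) := by
    rw [← Nat.cast_sum, hZnat]
    push_cast
    have : ∑ j ∈ Finset.Icc 1 (k + 1), ((l : ℝ) + 1) ^ j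
        = ∑ j ∈ Finset.Ico 1 (k + 2), ((l : ℝ) + 1) ^ j := by
      rw [show k + 2 = k + 1 + 1 from rfl, Finset.Ico_add_one_right_eq_Icc]
    rw [this, geom_sum_Ico hAne (by omega)]
    norm_num [hAdef]
  -- split hRect at n
  set S : ℕ := ∑ j ∈ Finset.Icc 1 k, cComp l n j with hSdef
  have hsplit : hRect l (k + 1) n = cComp l n (k + 1) + S := by
    rw [hRect, Finset.sum_Icc_succ_top (by omega : 1 ≤ k + 1)]
    exact Nat.add_comm _ _
  -- abbreviations and bounds
  set pm : ℝ := (polyCoeff l (k + 1) n : ℝ) with hpmdef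
  have hcp : cComp l n (k + 1) = polyCoeff l (k + 1) n :=
    (ETB.cComp_eq_coeff l n (k + 1)).trans (ETB.polyCoeff_eq l (k + 1) n).symm
  have hpm : pm ≤ A ^ k := by
    have h1 : ((Polynomial.X : Polynomial ℕ) ^ 0) = 1 := pow_zero _ -- dummy
    have h2 := ETB.coeff_P_pow_le l k n
    rw [← ETB.polyCoeff_eq] at h2
    calc pm ≤ (((l + 1) ^ k : ℕ) : ℝ) := by rw [hpmdef]; exact_mod_cast h2
    _ = A ^ k := by push_cast [hAdef]; ring
  have hpm0 : 0 ≤ pm := Nat.cast_nonneg _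
  have hS0 : (0 : ℝ) ≤ (S : ℝ) := Nat.cast_nonneg _
  have hSnat : S ≤ ∑ i ∈ Finset.range k, (l + 1) ^ i := by
    rw [hSdef, ← Finset.Ico_add_one_right_eq_Icc, Finset.sum_Ico_eq_sum_range]
    refine Finset.sum_le_sum fun i _ => ?_
    rw [ETB.cComp_eq_coeff, Nat.add_comm 1 i]
    exact ETB.coeff_P_pow_le l i n
  have hSr : (S : ℝ) * (A - 1) ≤ A ^ k := by
    have h3 : (S : ℝ) ≤ ∑ i ∈ Finset.range k, A ^ i := by
      calc (S : ℝ) ≤ ((∑ i ∈ Finset.range k, (l + 1) ^ i : ℕ) : ℝ) := by exact_mod_cast hSnat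
      _ = ∑ i ∈ Finset.range k, A ^ i := by push_cast [hAdef]; ring_nf
    rw [geom_sum_eq hAne] at h3
    have hA1' : (0 : ℝ) < A - 1 := by linarith
    have := mul_le_mul_of_nonneg_right h3 hA1'.le
    rw [div_mul_cancel₀ _ (ne_of_gt hA1')] at this
    linarith [this]
  have hxk1 : (1 : ℝ) ≤ A ^ k := one_le_pow₀ hA1.le
  have hl0 : (l : ℝ) ≠ 0 := by positivity
  have hγ : (1 : ℝ) / (1 + 1 / (l : ℝ)) = (A - 1) / A := by
    rw [hAdef]
    field_simp
    ring
  have hBA : A < A ^ (k + 2) := by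
    calc A < A ^ 2 := by nlinarith
    _ ≤ A ^ (k + 2) := pow_le_pow_right₀ hA1.le (by omega)
  have hBApos : (0 : ℝ) < A ^ (k + 2) - A := by linarith
  have hBpos : (0 : ℝ) < A ^ (k + 2) := by positivity
  have hprobX : probX l (k + 1) n = (pm + (S : ℝ)) * (A - 1) / (A ^ (k + 2) - A) := by
    rw [probX, hZr, hsplit, hcp]
    push_cast
    rw [div_div_eq_mul_div]
  have hprobS : probS l (k + 1) n = (1 / A) ^ (k + 1) * pm := by
    rw [probS, hAdef]
  have h_eq : probX l (k + 1) n - 1 / (1 + 1 / (l : ℝ)) * probS l (k + 1) n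
      = (A - 1) * ((S : ℝ) * A ^ (k + 2) + pm * A) / ((A ^ (k + 2) - A) * A ^ (k + 2)) := by
    rw [hprobX, hprobS, hγ]
    rw [div_pow, one_pow]
    field_simp
    ring
  rw [h_eq]
  constructor
  · apply div_nonneg
    · apply mul_nonneg (by linarith)
      apply add_nonneg (mul_nonneg hS0 (by positivity)) (mul_nonneg hpm0 (by positivity))
    · exact (mul_pos hBApos hBpos).le
  · rw [div_le_div_iff₀ (mul_pos hBApos hBpos) (by positivity : (0:ℝ) < A ^ 2)]
    have hBexp : A ^ (k + 2) = A ^ k * (A * A) := by ring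
    rw [hBexp]
    set x : ℝ := A ^ k with hxdef
    nlinarith [mul_le_mul_of_nonneg_right hSr (by positivity : (0:ℝ) ≤ x * (A * A * A * A)),
      mul_le_mul_of_nonneg_right hpm
        (mul_nonneg (by linarith) (by positivity) : (0:ℝ) ≤ (A - 1) * (A * A * A)),
      mul_nonneg (mul_nonneg (sub_nonneg.2 hxk1) (by positivity : (0:ℝ) ≤ x))
        (by positivity : (0:ℝ) ≤ A * A * A * A),
      mul_nonneg (mul_nonneg (by linarith : (0:ℝ) ≤ A - 2) (by positivity : (0:ℝ) ≤ x))
        (by positivity : (0:ℝ) ≤ A * A * A)]
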